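/- Let A be an n×n labeled transition matrix (whose entries do not contain τ), S a boolean n×n matrix of silent steps, ρ a boolean termination vector, V a surjective boolean n×N collector, and Π = S* the reflexive-transitive closure of S. Put R = VVᵀ. If the weak-bisimulation conditions VVᵀΠV = ΠV, VVᵀΠAΠV = ΠAΠV, and VVᵀΠρ = Πρ hold, then RS ≤ ΠR, RA ≤ ΠAΠR, and Rρ ≤ Πρ. -/

import Mathlib

open Matrix

instance : CommSemiring Prop where
  add a b := a ∨ b
  add_assoc a b c := propext or_assoc
  zero := False
  zero_add a := false_or a
  add_zero a := or_false a
  add_comm a b := propext or_comm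
  nsmul n p := n ≠ 0 ∧ p
  nsmul_zero p := by show ((0:ℕ) ≠ 0 ∧ p) = False; simp
  nsmul_succ n p := by
    show ((n + 1 : ℕ) ≠ 0 ∧ p) = ((n ≠ 0 ∧ p) ∨ p)
    by_cases h : n = 0 <;> simp [h]
  mul a b := a ∧ b
  mul_assoc a b c := propext and_assoc
  one := True
  one_mul a := true_and a
  mul_one a := and_true a
  left_distrib a b c := propext and_or_left
  right_distrib a b c := propext or_and_right
  zero_mul a := false_and a
  mul_zero a := and_false a
  mul_comm a b := propext and_comm

instance {α : Type*} : CommSemiring (Set α) where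
  add a b := a ∪ b
  add_assoc := Set.union_assoc
  zero := (∅ : Set α)
  zero_add := Set.empty_union
  add_zero := Set.union_empty
  add_comm := Set.union_comm
  nsmul n s := {x ∈ s | n ≠ 0}
  nsmul_zero s := by show {x ∈ s | (0:ℕ) ≠ 0} = (∅ : Set α); simp
  nsmul_succ n s := by
    show {x ∈ s | (n + 1 : ℕ) ≠ 0} = {x ∈ s | n ≠ 0} ∪ s
    by_cases h : n = 0 <;> ext x <;> simp [h]
  mul a b := a ∩ b
  mul_assoc := Set.inter_assoc
  one := (Set.univ : Set α)
  one_mul := Set.univ_inter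
  mul_one := Set.inter_univ
  left_distrib := Set.inter_union_distrib_left
  right_distrib := Set.union_inter_distrib_right
  zero_mul := Set.empty_inter
  mul_zero := Set.inter_empty
  mul_comm := Set.inter_comm

/-- Embedding of boolean matrices into `Set 𝒜`-labeled matrices:
a `True` entry becomes the full action set, a `False` entry the empty set. -/
def emb (𝒜 : Type*) {m p : Type*} (M : Matrix m p Prop) : Matrix m p (Set 𝒜) :=
  Matrix.of fun i j => {_a : 𝒜 | M i j}

/-- Reflexive-transitive closure `S* = Σ_{k ≥ 0} S^k` of a boolean matrix. -/
def mstar {n : ℕ} (S : Matrix (Fin n) (Fin n) Prop) : Matrix (Fin n) (Fin n) Prop :=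
  Matrix.of fun i j => ∃ k : ℕ, (S ^ k) i j

lemma sum_prop {ι : Type*} (s : Finset ι) (f : ι → Prop) :
    (∑ k ∈ s, f k) ↔ ∃ k ∈ s, f k := by
  classical
  induction s using Finset.induction_on with
  | empty => rw [Finset.sum_empty]; show False ↔ _; simp
  | insert _ _ h ih =>
      rw [Finset.sum_insert h]
      show _ ∨ _ ↔ _
      rw [ih]; simp

lemma mem_sum_set {α ι : Type*} (a : α) (s : Finset ι) (f : ι → Set α) :
    a ∈ (∑ k ∈ s, f k) ↔ ∃ k ∈ s, a ∈ f k := by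
  classical
  induction s using Finset.induction_on with
  | empty => rw [Finset.sum_empty]; show False ↔ _; simp
  | insert _ _ h ih =>
      rw [Finset.sum_insert h]
      show _ ∈ _ ∪ _ ↔ _
      rw [Set.mem_union, ih]; simp

lemma mulP {n m p : ℕ} (M : Matrix (Fin n) (Fin m) Prop) (N : Matrix (Fin m) (Fin p) Prop)
    (i : Fin n) (j : Fin p) : (M * N) i j ↔ ∃ k, M i k ∧ N k j := by
  rw [Matrix.mul_apply, sum_prop]
  exact ⟨fun ⟨k, _, h⟩ => ⟨k, h⟩, fun ⟨k, h⟩ => ⟨k, Finset.mem_univ k, h⟩⟩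

lemma mulS {n m p : ℕ} {𝒜 : Type*} (M : Matrix (Fin n) (Fin m) (Set 𝒜))
    (N : Matrix (Fin m) (Fin p) (Set 𝒜)) (i : Fin n) (j : Fin p) (a : 𝒜) :
    a ∈ (M * N) i j ↔ ∃ k, a ∈ M i k ∧ a ∈ N k j := by
  rw [Matrix.mul_apply, mem_sum_set]
  exact ⟨fun ⟨k, _, h⟩ => ⟨k, h⟩, fun ⟨k, h⟩ => ⟨k, Finset.mem_univ k, h⟩⟩

/-- the weak-bisimulation matrix conditions imply the simulation-style
conditions `RS ≤ PiR`, `RA ≤ PiAPiR` and `Rρ ≤ Piρ` for `R = VVᵀ` and `Pi = S*`. -/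
theorem weak_bisim_implies_simulation {n N : ℕ} {𝒜 : Type*} (τ : 𝒜)
    (A : Matrix (Fin n) (Fin n) (Set 𝒜)) (hA : ∀ i j, τ ∉ A i j)
    (S : Matrix (Fin n) (Fin n) Prop) (ρ : Matrix (Fin n) (Fin 1) Prop)
    (V : Matrix (Fin n) (Fin N) Prop)
    (hcol : ∀ i, ∃! j, V i j) (hsurj : ∀ j, ∃ i, V i j)
    (Pi : Matrix (Fin n) (Fin n) Prop) (hPi : Pi = mstar S)
    (R : Matrix (Fin n) (Fin n) Prop) (hR : R = V * Vᵀ)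
    (h₁ : V * Vᵀ * Pi * V = Pi * V)
    (h₂ : emb 𝒜 V * emb 𝒜 Vᵀ * emb 𝒜 Pi * A * emb 𝒜 Pi * emb 𝒜 V =
      emb 𝒜 Pi * A * emb 𝒜 Pi * emb 𝒜 V)
    (h₃ : V * Vᵀ * Pi * ρ = Pi * ρ) :
    (∀ i j, (R * S) i j ≤ (Pi * R) i j) ∧
    (∀ i j, (emb 𝒜 R * A) i j ≤ (emb 𝒜 Pi * A * emb 𝒜 Pi * emb 𝒜 R) i j) ∧
    (∀ i j, (R * ρ) i j ≤ (Pi * ρ) i j) := by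
  subst hPi hR
  choose c hc using fun i => (hcol i).exists
  have hrefl : ∀ i, mstar S i i := fun i => ⟨0, by rw [pow_zero, Matrix.one_apply_eq]; trivial⟩
  have hstep : ∀ i j, S i j → mstar S i j := fun i j h => ⟨1, by rwa [pow_one]⟩
  refine ⟨?_, ?_, ?_⟩
  · intro i j hij
    rw [mulP] at hij
    obtain ⟨k, hik, hkj⟩ := hij
    have h1' : ((V * Vᵀ) * (mstar S * V)) i (c j) := by
      rw [mulP]
      exact ⟨k, hik, (mulP _ _ _ _).mpr ⟨j, hstep k j hkj, hc j⟩⟩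
    rw [← Matrix.mul_assoc, h₁, mulP] at h1'
    obtain ⟨m, him, hm⟩ := h1'
    show (mstar S * (V * Vᵀ)) i j
    rw [mulP]
    exact ⟨m, him, (mulP _ _ _ _).mpr ⟨c j, hm, hc j⟩⟩
  · intro i j a ha
    rw [mulS] at ha
    obtain ⟨k, hik, hkj⟩ := ha
    have hik' : (V * Vᵀ) i k := hik
    rw [mulP] at hik'
    obtain ⟨c0, h1, h2⟩ := hik'
    have key : a ∈ ((emb 𝒜 V * emb 𝒜 Vᵀ) *
        ((emb 𝒜 (mstar S) * A * emb 𝒜 (mstar S)) * emb 𝒜 V)) i (c j) := by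
      rw [mulS]
      refine ⟨k, ?_, ?_⟩
      · rw [mulS]; exact ⟨c0, h1, h2⟩
      · rw [mulS]
        refine ⟨j, ?_, hc j⟩
        rw [mulS]
        refine ⟨j, ?_, hrefl j⟩
        rw [mulS]
        exact ⟨k, hrefl k, hkj⟩
    rw [← Matrix.mul_assoc, ← Matrix.mul_assoc, ← Matrix.mul_assoc] at key
    rw [h₂] at key
    rw [mulS] at key
    obtain ⟨m, hm1, hm2⟩ := key
    rw [mulS]
    refine ⟨m, hm1, ?_⟩
    show (V * Vᵀ) m j
    rw [mulP]
    exact ⟨c j, hm2, hc j⟩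
  · intro i j hij
    rw [mulP] at hij
    obtain ⟨k, hik, hkj⟩ := hij
    have h3' : ((V * Vᵀ) * (mstar S * ρ)) i j := by
      rw [mulP]
      exact ⟨k, hik, (mulP _ _ _ _).mpr ⟨k, hrefl k, hkj⟩⟩
    rw [← Matrix.mul_assoc, h₃] at h3'
    exact h3'
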